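/- If φ is a rational multiple of 2π (i.e., φ/(2π) ∈ ℚ) and cos φ is rational, then cos φ ∈ {0, 1/2, -1/2, 1, -1}. -/

import Mathlib

open Real

lemma niven_aux (ζ : ℂ) (n : ℕ) (hn : 0 < n) (hζ : ζ ^ n = 1) : IsIntegral ℤ ζ := by
  refine ⟨Polynomial.X ^ n - 1, Polynomial.monic_X_pow_sub_C 1 hn.ne', ?_⟩
  simp [Polynomial.eval₂, hζ]

namespace Port

theorem niven (φ : ℝ) (hφ : ∃ q : ℚ, φ / (2 * π) = q)
    (hcos : ∃ r : ℚ, Real.cos φ = r) :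
    Real.cos φ ∈ ({0, 1/2, -1/2, 1, -1} : Set ℝ) := by
  obtain ⟨q, hq⟩ := hφ
  obtain ⟨r, hr⟩ := hcos
  have hπ : (2 * π) ≠ 0 := by positivity
  have hφ' : φ = q * (2 * π) := by field_simp at hq; linarith
  set ζ : ℂ := Complex.exp (φ * Complex.I) with hζdef
  have hroot : ζ ^ (q.den : ℕ) = 1 := by
    rw [hζdef, ← Complex.exp_nat_mul, hφ']
    have hq' : (q.den : ℂ) * (q : ℂ) = (q.num : ℂ) := by
      rw [Rat.cast_def]
      have : (q.den : ℂ) ≠ 0 := by exact_mod_cast q.den_nz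
      field_simp
    have key : ((q.den : ℂ)) * ((((q : ℝ) * (2 * π) : ℝ) : ℂ) * Complex.I)
        = (q.num : ℂ) * (2 * π * Complex.I) := by
      push_cast
      linear_combination (2 * (π : ℂ) * Complex.I) * hq'
    rw [key, Complex.exp_int_mul_two_pi_mul_I]
  have hden : 0 < q.den := q.pos
  have hint : IsIntegral ℤ ζ := niven_aux ζ q.den hden hroot
  have hinv : ζ⁻¹ = ζ ^ (q.den - 1) := by
    have hne : ζ ≠ 0 := Complex.exp_ne_zero _
    field_simp
    rw [← pow_succ', Nat.sub_add_cancel hden, hroot]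
  have hint2 : IsIntegral ℤ (ζ + ζ⁻¹) := by
    rw [hinv]; exact hint.add (hint.pow _)
  have hsum : ζ + ζ⁻¹ = 2 * Real.cos φ := by
    rw [hζdef, ← Complex.exp_neg]
    rw [show -((φ : ℂ) * Complex.I) = ((-φ : ℝ) : ℂ) * Complex.I by push_cast; ring]
    rw [Complex.exp_mul_I, Complex.exp_mul_I, Complex.ofReal_cos]
    push_cast
    rw [Complex.cos_neg, Complex.sin_neg]
    ring
  have hint3 : IsIntegral ℤ ((2 * r : ℚ) : ℂ) := by
    have : ((2 * r : ℚ) : ℂ) = ζ + ζ⁻¹ := by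
      rw [hsum, hr]; push_cast; ring
    rwa [this]
  have hint4 : IsIntegral ℤ (2 * r : ℚ) := by
    have hinj : Function.Injective (algebraMap ℚ ℂ) := (algebraMap ℚ ℂ).injective
    have : algebraMap ℚ ℂ (2 * r) = ((2 * r : ℚ) : ℂ) := by
      simp [Algebra.algebraMap_eq_smul_one]
    exact (isIntegral_algebraMap_iff hinj).mp (by rwa [this])
  obtain ⟨z, hz⟩ := IsIntegrallyClosed.isIntegral_iff.mp hint4
  have hz' : (z : ℚ) = 2 * r := by exact_mod_cast hz
  have hzr : (z : ℝ) = 2 * Real.cos φ := by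
    have : ((z : ℚ) : ℝ) = ((2 * r : ℚ) : ℝ) := by exact_mod_cast hz'
    push_cast at this
    rw [hr]; push_cast; linarith
  have hb : |Real.cos φ| ≤ 1 := Real.abs_cos_le_one φ
  have hz2 : |(z : ℝ)| ≤ 2 := by
    rw [hzr, abs_mul, abs_two]; linarith [abs_le.mp hb]
  obtain ⟨hz3, hz4⟩ : -2 ≤ z ∧ z ≤ 2 := by
    rw [abs_le] at hz2; exact_mod_cast hz2
  simp only [Set.mem_insert_iff, Set.mem_singleton_iff]
  interval_cases z <;> norm_num at hzr <;>
    [skip; skip; skip; skip; skip] <;> first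
    | (left; linarith)
    | (right; left; linarith)
    | (right; right; left; linarith)
    | (right; right; right; left; linarith)
    | (right; right; right; right; linarith)
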